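/- Let g : [t₀,∞) → ℝ be nonnegative differentiable with ġ(t) ≤ -γ(t)g(t) + a(t)g(t)² + β(t), where a, β, γ are continuous and nonnegative. If μ ∈ C¹, μ > 0, satisfies a(t)/μ(t)² + β(t) ≤ (1/μ(t))(γ(t) - μ'(t)/μ(t)) for all t ≥ t₀, and μ(t₀)g(t₀) < 1, then g(t) < 1/μ(t) for all t ≥ t₀. -/

import Mathlib

open Set

/-- Special case `α(t,y) = a(t) y²` of the main theorem. -/
theorem stmt17
    (t₀ : ℝ) (ht₀ : 0 ≤ t₀)
    (g g' γ β a μ μ' : ℝ → ℝ)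
    (hgnonneg : ∀ t ∈ Ici t₀, 0 ≤ g t)
    (hg : ∀ t ∈ Ici t₀, HasDerivAt g (g' t) t)
    (hβ : ContinuousOn β (Ici t₀)) (hβnonneg : ∀ t ∈ Ici t₀, 0 ≤ β t)
    (hγ : ContinuousOn γ (Ici t₀)) (hγnonneg : ∀ t ∈ Ici t₀, 0 ≤ γ t)
    (ha : ContinuousOn a (Ici t₀)) (hanonneg : ∀ t ∈ Ici t₀, 0 ≤ a t)
    (hineq : ∀ t ∈ Ici t₀, g' t ≤ -γ t * g t + a t * g t ^ 2 + β t)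
    (hμpos : ∀ t ∈ Ici t₀, 0 < μ t)
    (hμ : ∀ t ∈ Ici t₀, HasDerivAt μ (μ' t) t)
    (hμ'cont : ContinuousOn μ' (Ici t₀))
    (hcomp : ∀ t ∈ Ici t₀, a t / μ t ^ 2 + β t ≤ (1 / μ t) * (γ t - μ' t / μ t))
    (hinit : μ t₀ * g t₀ < 1) :
    ∀ t ∈ Ici t₀, g t < 1 / μ t := by
  have hμcont : ContinuousOn μ (Ici t₀) := fun t ht =>
    (hμ t ht).continuousAt.continuousWithinAt
  have hμne : ∀ t ∈ Ici t₀, μ t ≠ 0 := fun t ht => (hμpos t ht).ne'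
  set h : ℝ → ℝ := fun t => μ t * g t with hhdef
  have hhderiv : ∀ t ∈ Ici t₀, HasDerivAt h (μ' t * g t + μ t * g' t) t :=
    fun t ht => (hμ t ht).mul (hg t ht)
  have hhcont : ContinuousOn h (Ici t₀) := fun t ht =>
    (hhderiv t ht).continuousAt.continuousWithinAt
  set c : ℝ → ℝ := fun t => γ t - μ' t / μ t - a t / μ t with hcdef
  have hccont : ContinuousOn c (Ici t₀) :=
    (hγ.sub (hμ'cont.div hμcont hμne)).sub (ha.div hμcont hμne)
  -- key pointwise inequality
  have hkey : ∀ t ∈ Ici t₀, h t ≤ 1 →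
      μ' t * g t + μ t * g' t + (h t - 1) * c t ≤ 0 := by
    intro t ht hle
    have hm : 0 < μ t := hμpos t ht
    have hgn : 0 ≤ g t := hgnonneg t ht
    have han : 0 ≤ a t := hanonneg t ht
    have h1 : a t / μ t + μ t * β t ≤ γ t - μ' t / μ t := by
      have hc := hcomp t ht
      have := mul_le_mul_of_nonneg_left hc hm.le
      calc a t / μ t + μ t * β t = μ t * (a t / μ t ^ 2 + β t) := by
            field_simp
        _ ≤ μ t * ((1 / μ t) * (γ t - μ' t / μ t)) := this
        _ = γ t - μ' t / μ t := by field_simp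
    have h2 : μ t * g' t ≤ μ t * (-γ t * g t + a t * g t ^ 2 + β t) :=
      mul_le_mul_of_nonneg_left (hineq t ht) hm.le
    have h3 : a t * g t ^ 2 * μ t ≤ a t * g t := by
      have : a t * g t * (μ t * g t) ≤ a t * g t * 1 :=
        mul_le_mul_of_nonneg_left hle (mul_nonneg han hgn)
      nlinarith
    have e1 : μ' t / μ t * μ t = μ' t := div_mul_cancel₀ _ hm.ne'
    have e2 : a t / μ t * μ t = a t := div_mul_cancel₀ _ hm.ne'
    simp only [hhdef, hcdef]
    nlinarith [mul_le_mul_of_nonneg_right h1 hgn, mul_pos hm hm,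
      mul_le_mul_of_nonneg_left h1 hm.le]
  -- main claim
  have key : ∀ t ∈ Ici t₀, h t < 1 := by
    by_contra hcon
    push_neg at hcon
    obtain ⟨t₁, ht₁, ht₁'⟩ := hcon
    set S : Set ℝ := Ici t₀ ∩ h ⁻¹' (Ici 1) with hSdef
    have hSne : S.Nonempty := ⟨t₁, ht₁, ht₁'⟩
    have hSbdd : BddBelow S := ⟨t₀, fun t ht => ht.1⟩
    have hSclosed : IsClosed S :=
      hhcont.preimage_isClosed_of_isClosed isClosed_Ici isClosed_Ici
    set T := sInf S with hTdef
    have hTS : T ∈ S := hSclosed.csInf_mem hSne hSbdd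
    have hTt₀ : t₀ ≤ T := hTS.1
    set C : ℝ → ℝ := fun t => ∫ s in t₀..t, c s with hCdef
    have hCcont : ContinuousOn C (Icc t₀ T) := by
      have : uIcc t₀ T = Icc t₀ T := uIcc_of_le hTt₀
      rw [← this]
      exact intervalIntegral.continuousOn_primitive_interval
        ((hccont.mono (by rw [this]; exact Icc_subset_Ici_self)).integrableOn_compact
          (by rw [this]; exact isCompact_Icc))
    have hCderiv : ∀ t ∈ Ioo t₀ T, HasDerivAt C (c t) t := by
      intro t htI
      refine intervalIntegral.integral_hasDerivAt_right ?_ ?_ ?_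
      · apply ContinuousOn.intervalIntegrable
        apply hccont.mono
        rw [uIcc_of_le (le_of_lt htI.1)]
        exact Icc_subset_Ici_self
      · exact (hccont.mono (Ioi_subset_Ici le_rfl : Ioi t₀ ⊆ Ici t₀)).stronglyMeasurableAtFilter
          isOpen_Ioi t htI.1
      · exact (hccont.mono (Ioi_subset_Ici le_rfl : Ioi t₀ ⊆ Ici t₀)).continuousAt
          (isOpen_Ioi.mem_nhds htI.1)
    set v : ℝ → ℝ := fun t => (h t - 1) * Real.exp (C t) with hvdef
    have hvcont : ContinuousOn v (Icc t₀ T) :=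
      (((hhcont.mono Icc_subset_Ici_self).sub continuousOn_const).mul
        (Real.continuous_exp.comp_continuousOn hCcont))
    have hvderiv : ∀ t ∈ Ioo t₀ T, HasDerivAt v
        ((μ' t * g t + μ t * g' t) * Real.exp (C t)
          + (h t - 1) * (Real.exp (C t) * c t)) t := by
      intro t htI
      exact (((hhderiv t (le_of_lt htI.1)).sub_const 1).mul ((hCderiv t htI).exp))
    have hmono : AntitoneOn v (Icc t₀ T) := by
      apply antitoneOn_of_deriv_nonpos (convex_Icc t₀ T) hvcont
      · intro t htI
        rw [interior_Icc] at htI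
        exact (hvderiv t htI).differentiableAt.differentiableWithinAt
      · intro t htI
        rw [interior_Icc] at htI
        rw [(hvderiv t htI).deriv]
        have htlt : h t < 1 := by
          by_contra hge
          push_neg at hge
          have : t ∈ S := ⟨le_of_lt htI.1, hge⟩
          exact absurd (csInf_le hSbdd this) (not_le.2 htI.2)
        have hk := hkey t (le_of_lt htI.1) htlt.le
        have hexp : 0 < Real.exp (C t) := Real.exp_pos _
        nlinarith
    have hvT : 0 ≤ v T := by
      have : (1:ℝ) ≤ h T := hTS.2
      exact mul_nonneg (by linarith) (Real.exp_pos _).le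
    have hvt₀ : v t₀ < 0 := by
      have : C t₀ = 0 := intervalIntegral.integral_same
      simp only [hvdef, this, Real.exp_zero, mul_one]
      simpa [hhdef] using sub_neg.2 hinit
    have := hmono (left_mem_Icc.2 hTt₀) (right_mem_Icc.2 hTt₀) hTt₀
    linarith
  intro t ht
  rw [lt_div_iff₀ (hμpos t ht)]
  have := key t ht
  simpa [hhdef, mul_comm] using this
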